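/- Let F be any CDF and 0 ≤ l < u. Then ∫_{(l,u]}(F(t) − F(l)) dF(t) + ∫_{(l,u]}(F(t−) − F(l)) dF(t) = (F(u) − F(l))², where F(t−) denotes the left limit. -/

import Mathlib

open MeasureTheory

/-- For any CDF `F` and `0 ≤ l < u`,
`∫_{(l,u]}(F(t) − F(l)) dF(t) + ∫_{(l,u]}(F(t−) − F(l)) dF(t) = (F(u) − F(l))²`. -/
theorem stieltjes_sum_of_integrals_eq_sq (F : StieltjesFunction ℝ)
    (l u : ℝ) (hl : 0 ≤ l) (hlu : l < u) :
    (∫ t in Set.Ioc l u, (F t - F l) ∂F.measure) +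
      (∫ t in Set.Ioc l u, (Function.leftLim F t - F l) ∂F.measure)
      = (F u - F l) ^ 2 := by
  set ν := F.measure.restrict (Set.Ioc l u) with hν
  have hνuniv : ν Set.univ = ENNReal.ofReal (F u - F l) := by
    rw [hν, Measure.restrict_apply_univ, F.measure_Ioc]
  have hνfin : IsFiniteMeasure ν := ⟨by rw [hνuniv]; exact ENNReal.ofReal_lt_top⟩
  -- identify the two lintegrals with measures of subsets of the product
  have hAset : MeasurableSet {p : ℝ × ℝ | p.2 ≤ p.1} :=
    measurableSet_le measurable_snd measurable_fst
  have hBset : MeasurableSet {p : ℝ × ℝ | p.1 < p.2} :=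
    measurableSet_lt measurable_fst measurable_snd
  have hA : ∫⁻ t, ν (Set.Iic t) ∂ν = (ν.prod ν) {p : ℝ × ℝ | p.2 ≤ p.1} := by
    rw [Measure.prod_apply hAset]; rfl
  have hB : ∫⁻ t, ν (Set.Iio t) ∂ν = (ν.prod ν) {p : ℝ × ℝ | p.2 < p.1} := by
    rw [Measure.prod_apply (measurableSet_lt measurable_snd measurable_fst)]; rfl
  have hswap : (ν.prod ν) {p : ℝ × ℝ | p.2 < p.1} = (ν.prod ν) {p : ℝ × ℝ | p.1 < p.2} := by
    conv_lhs => rw [← Measure.prod_swap]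
    rw [Measure.map_apply measurable_swap (measurableSet_lt measurable_snd measurable_fst)]
    congr 1
  have hcompl : {p : ℝ × ℝ | p.1 < p.2} = {p : ℝ × ℝ | p.2 ≤ p.1}ᶜ := by
    ext p; simp [not_le]
  have hsum : (∫⁻ t, ν (Set.Iic t) ∂ν) + (∫⁻ t, ν (Set.Iio t) ∂ν)
      = ENNReal.ofReal (F u - F l) * ENNReal.ofReal (F u - F l) := by
    rw [hA, hB, hswap, hcompl, measure_add_measure_compl hAset, Measure.prod_apply
      MeasurableSet.univ]
    simp [hνuniv, lintegral_const]
  -- rewrite the integrands via measures of intervals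
  have key1 : ∀ t ∈ Set.Ioc l u, ENNReal.ofReal (F t - F l) = ν (Set.Iic t) := by
    intro t ht
    rw [hν, Measure.restrict_apply measurableSet_Iic, ← F.measure_Ioc]
    congr 1
    ext x
    simp only [Set.mem_Ioc, Set.mem_inter_iff, Set.mem_Iic]
    exact ⟨fun h => ⟨h.2, h.1, h.2.trans ht.2⟩, fun h => ⟨h.2.1, h.1⟩⟩
  have key2 : ∀ t ∈ Set.Ioc l u, ENNReal.ofReal (Function.leftLim F t - F l)
      = ν (Set.Iio t) := by
    intro t ht
    rw [hν, Measure.restrict_apply measurableSet_Iio, ← F.measure_Ioo]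
    congr 1
    ext x
    simp only [Set.mem_Ioo, Set.mem_inter_iff, Set.mem_Iio, Set.mem_Ioc]
    exact ⟨fun h => ⟨h.2, h.1, h.2.le.trans ht.2⟩, fun h => ⟨h.2.1, h.1⟩⟩
  -- convert Bochner integrals to lintegrals
  have hmeas1 : Measurable fun t => F t - F l := (F.mono.measurable).sub measurable_const
  have hmeasL : Measurable (Function.leftLim F) := by
    have : Monotone (Function.leftLim F) := F.mono.leftLim
    exact this.measurable
  have hmeas2 : Measurable fun t => Function.leftLim F t - F l := hmeasL.sub measurable_const
  have h1 : (∫ t in Set.Ioc l u, (F t - F l) ∂F.measure)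
      = (∫⁻ t, ν (Set.Iic t) ∂ν).toReal := by
    rw [integral_eq_lintegral_of_nonneg_ae]
    · congr 1
      refine setLIntegral_congr_fun measurableSet_Ioc (fun t ht => ?_)
      exact key1 t ht
    · filter_upwards [ae_restrict_mem measurableSet_Ioc] with t ht
      simp only [Pi.zero_apply]
      exact sub_nonneg.2 (F.mono ht.1.le)
    · exact hmeas1.aestronglyMeasurable
  have h2 : (∫ t in Set.Ioc l u, (Function.leftLim F t - F l) ∂F.measure)
      = (∫⁻ t, ν (Set.Iio t) ∂ν).toReal := by
    rw [integral_eq_lintegral_of_nonneg_ae]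
    · congr 1
      refine setLIntegral_congr_fun measurableSet_Ioc (fun t ht => ?_)
      exact key2 t ht
    · filter_upwards [ae_restrict_mem measurableSet_Ioc] with t ht
      simp only [Pi.zero_apply]
      exact sub_nonneg.2 (F.mono.le_leftLim ht.1)
    · exact hmeas2.aestronglyMeasurable
  have hfin1 : (∫⁻ t, ν (Set.Iic t) ∂ν) ≠ ⊤ := by
    intro h
    rw [h] at hsum
    simp [top_add] at hsum
    exact (ENNReal.mul_lt_top ENNReal.ofReal_lt_top ENNReal.ofReal_lt_top).ne hsum.symm
  have hfin2 : (∫⁻ t, ν (Set.Iio t) ∂ν) ≠ ⊤ := by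
    intro h
    rw [h] at hsum
    simp [add_top] at hsum
    exact (ENNReal.mul_lt_top ENNReal.ofReal_lt_top ENNReal.ofReal_lt_top).ne hsum.symm
  rw [h1, h2, ← ENNReal.toReal_add hfin1 hfin2, hsum, ← ENNReal.ofReal_mul
    (sub_nonneg.2 (F.mono hlu.le)), ENNReal.toReal_ofReal
    (mul_nonneg (sub_nonneg.2 (F.mono hlu.le)) (sub_nonneg.2 (F.mono hlu.le))), sq]
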